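/- Let T be the Collatz function (T(n) = n/2 for even n, T(n) = 3n+1 for odd n). Every non-trivial Collatz cycle passes through the domain of f₁ or f₂: if n > 4 and T^i(n) = n for some i ≥ 1, then there exists j with m = T^j(n) odd, m ≡ 5 (mod 6), and the 2-adic valuation of 3m + 1 at most 2. -/

import Mathlib

/-- The Collatz function. -/
def collatz (n : ℕ) : ℕ := if n % 2 = 0 then n / 2 else 3 * n + 1

lemma collatz_even {x : ℕ} (h : x % 2 = 0) : collatz x = x / 2 := by
  simp [collatz, h]

lemma collatz_odd {x : ℕ} (h : x % 2 = 1) : collatz x = 3 * x + 1 := by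
  simp [collatz, h]

lemma collatz_iter_div (k : ℕ) : ∀ x : ℕ, 2 ^ k ∣ x → collatz^[k] x = x / 2 ^ k := by
  induction k with
  | zero => simp
  | succ k ih =>
    intro x hx
    obtain ⟨c, rfl⟩ := hx
    have hx2 : (2 ^ (k + 1) * c) % 2 = 0 := by
      have : 2 ∣ 2 ^ (k + 1) * c := Dvd.dvd.mul_right (dvd_pow_self 2 (Nat.succ_ne_zero k)) c
      omega
    rw [Function.iterate_succ_apply, collatz_even hx2]
    have hdiv : 2 ^ (k + 1) * c / 2 = 2 ^ k * c := by
      rw [pow_succ, mul_comm (2 ^ k) 2, mul_assoc]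
      omega
    rw [hdiv, ih _ ⟨c, rfl⟩, Nat.mul_div_cancel_left _ (by positivity : 0 < 2 ^ k),
      Nat.mul_div_cancel_left _ (by positivity : 0 < 2 ^ (k + 1))]

lemma collatz_small (k : ℕ) : ∀ x : ℕ, (x = 1 ∨ x = 2 ∨ x = 4) →
    (collatz^[k] x = 1 ∨ collatz^[k] x = 2 ∨ collatz^[k] x = 4) := by
  induction k with
  | zero => intro x hx; simpa using hx
  | succ k ih =>
    intro x hx
    rw [Function.iterate_succ_apply]
    apply ih
    rcases hx with rfl | rfl | rfl <;> simp [collatz]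

theorem cycle_meets_f1_or_f2 (n : ℕ) (hn : 4 < n) (i : ℕ) (hi : 1 ≤ i)
    (hc : collatz^[i] n = n) :
    ∃ j : ℕ, Odd (collatz^[j] n) ∧ collatz^[j] n % 6 = 5 ∧
      padicValNat 2 (3 * collatz^[j] n + 1) ≤ 2 := by
  haveI : Fact (Nat.Prime 2) := ⟨Nat.prime_two⟩
  -- periodicity
  have hper : ∀ j : ℕ, collatz^[j] n = collatz^[j % i] n := by
    intro j
    conv_lhs => rw [← Nat.mod_add_div j i]
    rw [Function.iterate_add_apply, Function.iterate_mul, Function.iterate_fixed hc]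
  -- the minimal element of the cycle
  set S := (Finset.range i).image (fun j => collatz^[j] n) with hS
  have hSne : S.Nonempty := ⟨collatz^[0] n, Finset.mem_image.2 ⟨0, Finset.mem_range.2 hi, rfl⟩⟩
  set m := S.min' hSne with hm
  obtain ⟨j₀, hj₀i, hj₀⟩ := Finset.mem_image.1 (S.min'_mem hSne)
  have hmin : ∀ j, m ≤ collatz^[j] n := by
    intro j
    rw [hper j]
    exact S.min'_le _ (Finset.mem_image.2 ⟨j % i, Finset.mem_range.2 (Nat.mod_lt j (by omega)), rfl⟩)
  have hIter : ∀ k, collatz^[k + j₀] n = collatz^[k] m := by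
    intro k
    rw [Function.iterate_add_apply, hj₀]
  have hminm : ∀ k, m ≤ collatz^[k] m := fun k => (hIter k) ▸ hmin (k + j₀)
  -- n is a forward iterate of m
  have hn0 : n = collatz^[i * (j₀ + 1) - j₀] m := by
    have h1 : collatz^[i * (j₀ + 1)] n = n := by
      rw [hper, Nat.mul_mod_right]
      rfl
    have h2 : i * (j₀ + 1) - j₀ + j₀ = i * (j₀ + 1) := by
      have := Nat.le_mul_of_pos_left (j₀ + 1) (show 0 < i by omega)
      omega
    calc n = collatz^[i * (j₀ + 1)] n := h1.symm
      _ = collatz^[i * (j₀ + 1) - j₀ + j₀] n := by rw [h2]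
      _ = collatz^[i * (j₀ + 1) - j₀] m := hIter _
  -- m is not 0
  have hm0 : m ≠ 0 := by
    intro h0
    rw [h0] at hn0
    have : collatz 0 = 0 := by simp [collatz]
    rw [Function.iterate_fixed this] at hn0
    omega
  -- m is not 1
  have hm1 : m ≠ 1 := by
    intro h1
    rw [h1] at hn0
    have := collatz_small (i * (j₀ + 1) - j₀) 1 (Or.inl rfl)
    rw [← hn0] at this
    omega
  have hm2 : 2 ≤ m := by omega
  -- m is odd
  have hmodd : m % 2 = 1 := by
    by_contra h
    have he : m % 2 = 0 := by omega
    have := hminm 1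
    rw [Function.iterate_one, collatz_even he] at this
    omega
  -- the 2-adic valuation of 3m+1 is exactly 1
  set v := padicValNat 2 (3 * m + 1) with hv
  have h3m : (3 * m + 1) ≠ 0 := by omega
  have hdvd : 2 ^ v ∣ 3 * m + 1 := pow_padicValNat_dvd
  have hnd : ¬ 2 ^ (v + 1) ∣ 3 * m + 1 := pow_succ_padicValNat_not_dvd h3m
  have hv1 : 1 ≤ v := by
    by_contra h
    have : v = 0 := by omega
    rw [this] at hnd
    simp at hnd
    omega
  have hiter2 : ∀ w : ℕ, 2 ^ w ∣ 3 * m + 1 → collatz^[w + 1] m = (3 * m + 1) / 2 ^ w := by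
    intro w hw
    rw [Function.iterate_succ_apply, collatz_odd hmodd, collatz_iter_div w _ hw]
  have hmulv : 2 ^ v * ((3 * m + 1) / 2 ^ v) = 3 * m + 1 := Nat.mul_div_cancel' hdvd
  have hgev : m ≤ (3 * m + 1) / 2 ^ v := by
    have := hminm (v + 1)
    rwa [hiter2 v hdvd] at this
  have hvle : v ≤ 1 := by
    by_contra h
    have h4 : (4 : ℕ) ≤ 2 ^ v := by
      calc (4 : ℕ) = 2 ^ 2 := by norm_num
        _ ≤ 2 ^ v := Nat.pow_le_pow_right (by norm_num) (by omega)
    have : 4 * m ≤ 2 ^ v * ((3 * m + 1) / 2 ^ v) := Nat.mul_le_mul h4 hgev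
    omega
  have hveq : v = 1 := le_antisymm hvle hv1
  -- m₁ = (3m+1)/2 is the next odd element
  set m₁ := (3 * m + 1) / 2 ^ v with hm₁
  have hmul1 : 2 * m₁ = 3 * m + 1 := by
    have h2d : (2 : ℕ) ∣ 3 * m + 1 := by omega
    rw [hm₁, hveq, pow_one]
    exact Nat.mul_div_cancel' h2d
  have hnd4 : ¬ (4 : ℕ) ∣ 3 * m + 1 := by
    rw [hveq] at hnd
    simpa using hnd
  have hm₁odd : m₁ % 2 = 1 := by omega
  have hm₁3 : m₁ % 3 = 2 := by omega
  have hm₁6 : m₁ % 6 = 5 := by omega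
  have heq : collatz^[2 + j₀] n = m₁ := by
    rw [hIter 2]
    have h := hiter2 1 (by omega)
    rw [hm₁, hveq]
    simpa using h
  refine ⟨2 + j₀, ?_, ?_, ?_⟩
  · rw [heq, Nat.odd_iff]; exact hm₁odd
  · rw [heq]; exact hm₁6
  · rw [heq]
    by_contra h
    set w := padicValNat 2 (3 * m₁ + 1) with hw
    have hw3 : 3 ≤ w := by omega
    have hdvdw : 2 ^ w ∣ 3 * m₁ + 1 := pow_padicValNat_dvd
    have hiterw : collatz^[w + 1] m₁ = (3 * m₁ + 1) / 2 ^ w := by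
      rw [Function.iterate_succ_apply, collatz_odd hm₁odd, collatz_iter_div w _ hdvdw]
    have hmulw : 2 ^ w * ((3 * m₁ + 1) / 2 ^ w) = 3 * m₁ + 1 := Nat.mul_div_cancel' hdvdw
    have hgew : m ≤ (3 * m₁ + 1) / 2 ^ w := by
      have h1 : collatz^[w + 1 + (2 + j₀)] n = (3 * m₁ + 1) / 2 ^ w := by
        rw [Function.iterate_add_apply, heq, hiterw]
      have := hmin (w + 1 + (2 + j₀))
      rwa [h1] at this
    have h8 : (8 : ℕ) ≤ 2 ^ w := by
      calc (8 : ℕ) = 2 ^ 3 := by norm_num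
        _ ≤ 2 ^ w := Nat.pow_le_pow_right (by norm_num) hw3
    have : 8 * m ≤ 2 ^ w * ((3 * m₁ + 1) / 2 ^ w) := Nat.mul_le_mul h8 hgew
    omega
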